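/- Let P = (X,≺) be a finite poset with n elements and a ∈ X. Define t(a) as the maximum over y incomparable to a of the number of elements z ≼ a with z incomparable to y (and t(a) = 1 if a is comparable to everything), and t*(a) dually. Let N_k be the number of linear extensions L with L(a) = k. Then N_k ≤ t(a)·N_{k−1} whenever N_{k−1} > 0, and N_k ≤ t*(a)·N_{k+1} whenever N_{k+1} > 0. -/

import Mathlib

/-- The number of linear extensions `L` of a finite poset `X`
(order-preserving bijections `X ≃ Fin (card X)`, positions taken in `{1, …, n}`)
with `L a = j`. -/
noncomputable def NE (X : Type) [PartialOrder X] [Fintype X] (a : X) (j : ℕ) : ℕ :=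
  Nat.card {L : X ≃ Fin (Fintype.card X) // (∀ p q : X, p < q → L p < L q) ∧
    (L a : ℕ) + 1 = j}

open scoped Classical

/-- The parameter `t(a)`: the maximum, over `y` incomparable to `a`, of the number of
elements `z ≼ a` incomparable to `y`; equal to `1` if `a` is comparable to everything. -/
noncomputable def tpar (X : Type) [PartialOrder X] [Fintype X] (a : X) : ℕ :=
  if ∃ y : X, ¬(y ≤ a ∨ a ≤ y) then
    (Finset.univ.filter fun y : X => ¬(y ≤ a ∨ a ≤ y)).sup
      (fun y => Nat.card {z : X // ¬(z ≤ y ∨ y ≤ z) ∧ z ≤ a})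
  else 1

/-- The dual parameter `t*(a)`. -/
noncomputable def tstar (X : Type) [PartialOrder X] [Fintype X] (a : X) : ℕ :=
  if ∃ y : X, ¬(y ≤ a ∨ a ≤ y) then
    (Finset.univ.filter fun y : X => ¬(y ≤ a ∨ a ≤ y)).sup
      (fun y => Nat.card {z : X // ¬(z ≤ y ∨ y ≤ z) ∧ a ≤ z})
  else 1

/-! ### Auxiliary machinery for the sliding injection -/

private def gmap (i m p : ℕ) : ℕ :=
  if p = i then m else if i < p ∧ p ≤ m then p - 1 else p

private lemma gmap_lt {i m n p : ℕ} (him : i < m) (hmn : m < n) (hp : p < n) :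
    gmap i m p < n := by
  unfold gmap; split_ifs <;> omega

private lemma gmap_inj {i m p q : ℕ} (him : i < m) (h : gmap i m p = gmap i m q) : p = q := by
  unfold gmap at h; split_ifs at h <;> omega

/-- The slid linear extension: move the element at position `i` to position `m`,
shifting positions `i+1, …, m` down by one. -/
private noncomputable def slide {X : Type} [PartialOrder X] [Fintype X]
    (L : X ≃ Fin (Fintype.card X)) (i m : ℕ) (him : i < m) (hmn : m < Fintype.card X) :
    X ≃ Fin (Fintype.card X) :=
  Equiv.ofBijective (fun z => ⟨gmap i m (L z), gmap_lt him hmn (L z).isLt⟩)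
    ((Fintype.bijective_iff_injective_and_card _).mpr
      ⟨fun z w h => L.injective (Fin.val_injective (gmap_inj him (congrArg Fin.val h))),
        by simp⟩)

private lemma slide_val {X : Type} [PartialOrder X] [Fintype X]
    (L : X ≃ Fin (Fintype.card X)) (i m : ℕ) (him : i < m) (hmn : m < Fintype.card X) (z : X) :
    (slide L i m him hmn z : ℕ) = gmap i m (L z) := rfl

private def Pred {X : Type} [PartialOrder X] [Fintype X] (a : X) (m : ℕ)
    (L : X ≃ Fin (Fintype.card X)) (p : ℕ) : Prop :=
  ∃ y : X, (L y : ℕ) = p ∧ p < m ∧ ¬(y ≤ a ∨ a ≤ y)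

private noncomputable def idx {X : Type} [PartialOrder X] [Fintype X] (a : X) (m : ℕ)
    (L : X ≃ Fin (Fintype.card X)) : ℕ :=
  Nat.findGreatest (Pred a m L) m

private lemma step {X : Type} [PartialOrder X] [Fintype X] (a : X) (m : ℕ) (hm : 1 ≤ m)
    (L₀ : X ≃ Fin (Fintype.card X)) (h₀ext : ∀ p q : X, p < q → L₀ p < L₀ q)
    (h₀pos : (L₀ a : ℕ) + 1 = m)
    (L : X ≃ Fin (Fintype.card X)) (hext : ∀ p q : X, p < q → L p < L q)
    (hpos : (L a : ℕ) + 1 = m + 1) :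
    ∃ (him : idx a m L < m) (hmn : m < Fintype.card X),
      (∀ p q : X, p < q → slide L (idx a m L) m him hmn p < slide L (idx a m L) m him hmn q) ∧
      ((slide L (idx a m L) m him hmn a : ℕ) + 1 = m) ∧
      (m - idx a m L - 1 < tpar X a) := by
  classical
  have hLa : (L a : ℕ) = m := by omega
  have hmn : m < Fintype.card X := by have := (L a).isLt; omega
  -- existence of a position below `m` holding an element incomparable to `a`
  have hexists : ∃ p, Pred a m L p := by
    by_contra hne
    push_neg at hne
    have hall : ∀ z : X, (L z : ℕ) < m → z < a := by
      intro z hz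
      have h1 : ¬ Pred a m L (L z) := hne _
      have h2 : z ≤ a ∨ a ≤ z := by
        by_contra hc
        exact h1 ⟨z, rfl, hz, hc⟩
      rcases h2 with h2 | h2
      · rcases h2.lt_or_eq with h3 | h3
        · exact h3
        · exfalso; rw [h3] at hz; omega
      · exfalso
        rcases h2.lt_or_eq with h3 | h3
        · have := hext a z h3; rw [Fin.lt_def] at this; omega
        · rw [← h3] at hz; omega
    have hc1 : m ≤ (Finset.univ.filter fun z : X => z < a).card := by
      calc m = (Finset.univ : Finset (Fin m)).card := by simp
        _ ≤ (Finset.univ.filter fun z : X => z < a).card := by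
            apply Finset.card_le_card_of_injOn
              (fun r : Fin m => L.symm ⟨(r : ℕ), lt_trans r.isLt hmn⟩)
            · intro r _
              refine Finset.mem_filter.mpr ⟨Finset.mem_univ _, hall _ ?_⟩
              rw [Equiv.apply_symm_apply]
              exact r.isLt
            · intro r _ s _ h
              have h2 := L.symm.injective h
              rw [Fin.mk.injEq] at h2
              exact Fin.ext h2
    have hc2 : (Finset.univ.filter fun z : X => z < a).card ≤ m - 1 := by
      calc (Finset.univ.filter fun z : X => z < a).card
          ≤ (Finset.range (m - 1)).card := by
            apply Finset.card_le_card_of_injOn (fun z : X => (L₀ z : ℕ))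
            · intro z hz
              have hz' : z < a := (Finset.mem_filter.mp hz).2
              have := h₀ext z a hz'
              rw [Fin.lt_def] at this
              exact Finset.mem_range.mpr (by show (L₀ z : ℕ) < m - 1; omega)
            · intro z _ w _ h
              exact L₀.injective (Fin.val_injective h)
        _ = m - 1 := Finset.card_range _
    omega
  obtain ⟨p₀, y₀, hy₀, hp₀m, hinc₀⟩ := hexists
  have hip : Pred a m L (idx a m L) :=
    Nat.findGreatest_spec (le_of_lt hp₀m) ⟨y₀, hy₀, hp₀m, hinc₀⟩
  obtain ⟨y, hyv, him, hyinc⟩ := hip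
  -- maximality: everything strictly between positions `idx` and `m` is `≤ a`
  have hmax : ∀ z : X, idx a m L < (L z : ℕ) → (L z : ℕ) ≤ m → z ≤ a := by
    intro z h1 h2
    rcases eq_or_lt_of_le h2 with h3 | h3
    · have : L z = L a := Fin.val_injective (h3.trans hLa.symm)
      exact le_of_eq (L.injective this)
    · have hnp : ¬ Pred a m L (L z) := Nat.findGreatest_is_greatest h1 h3.le
      have h2' : z ≤ a ∨ a ≤ z := by
        by_contra hc
        exact hnp ⟨z, rfl, h3, hc⟩
      rcases h2' with h | h
      · exact h
      · exfalso
        rcases h.lt_or_eq with h4 | h4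
        · have := hext a z h4; rw [Fin.lt_def] at this; omega
        · rw [← h4] at h3; omega
  -- the slid map is a linear extension
  have hgm : ∀ p q : X, p < q → gmap (idx a m L) m (L p) < gmap (idx a m L) m (L q) := by
    intro p q hpq
    have hv : (L p : ℕ) < (L q : ℕ) := by
      have := hext p q hpq; rwa [Fin.lt_def] at this
    by_cases hp : (L p : ℕ) = idx a m L
    · have hpy : p = y := L.injective (Fin.val_injective (hp.trans hyv.symm))
      have hq : m < (L q : ℕ) := by
        by_contra hq
        push_neg at hq
        have hqa : q ≤ a := hmax q (by omega) hq
        have hya : y < a := lt_of_lt_of_le (hpy ▸ hpq) hqa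
        exact hyinc (Or.inl hya.le)
      unfold gmap; split_ifs <;> omega
    · unfold gmap; split_ifs <;> omega
  refine ⟨him, hmn, ?_, ?_, ?_⟩
  · intro p q hpq
    have h := hgm p q hpq
    rw [Fin.lt_def, slide_val, slide_val]
    exact h
  · rw [slide_val, hLa]
    unfold gmap
    rw [if_neg (by omega), if_pos ⟨him, le_refl m⟩]
    omega
  · -- the interval injects into `U(a, y)`, which is bounded by `tpar`
    have hz : ∀ r : ℕ, idx a m L < r → r ≤ m → ∀ h : r < Fintype.card X,
        ¬(L.symm ⟨r, h⟩ ≤ y ∨ y ≤ L.symm ⟨r, h⟩) ∧ L.symm ⟨r, h⟩ ≤ a := by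
      intro r hr1 hr2 h
      have hLz : (L (L.symm ⟨r, h⟩) : ℕ) = r := by rw [Equiv.apply_symm_apply]
      have hza : L.symm ⟨r, h⟩ ≤ a := hmax _ (by omega) (by omega)
      refine ⟨?_, hza⟩
      rintro (hc | hc)
      · rcases hc.lt_or_eq with h4 | h4
        · have := hext _ y h4; rw [Fin.lt_def] at this; omega
        · rw [h4] at hLz; omega
      · rcases hc.lt_or_eq with h4 | h4
        · exact hyinc (Or.inl (lt_of_lt_of_le h4 hza).le)
        · rw [← h4] at hLz; omega
    have hble : ∀ r : Fin (m - idx a m L), idx a m L + 1 + (r : ℕ) ≤ m := by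
      intro r; have := r.isLt; omega
    have hbn : ∀ r : Fin (m - idx a m L), idx a m L + 1 + (r : ℕ) < Fintype.card X :=
      fun r => lt_of_le_of_lt (hble r) hmn
    have hcard : m - idx a m L ≤ Nat.card {z : X // ¬(z ≤ y ∨ y ≤ z) ∧ z ≤ a} := by
      have hkey := Nat.card_le_card_of_injective
        (fun r : Fin (m - idx a m L) =>
          (⟨L.symm ⟨idx a m L + 1 + (r : ℕ), hbn r⟩,
            hz _ (by omega) (hble r) (hbn r)⟩ : {z : X // ¬(z ≤ y ∨ y ≤ z) ∧ z ≤ a}))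
        (by
          intro r s h
          have h2 := L.symm.injective (congrArg Subtype.val h)
          rw [Fin.mk.injEq] at h2
          exact Fin.ext (by omega))
      simpa using hkey
    have hsup : Nat.card {z : X // ¬(z ≤ y ∨ y ≤ z) ∧ z ≤ a} ≤ tpar X a := by
      have hcond : ∃ y' : X, ¬(y' ≤ a ∨ a ≤ y') := ⟨y, hyinc⟩
      unfold tpar
      rw [if_pos hcond]
      exact Finset.le_sup (f := fun y' : X => Nat.card {z : X // ¬(z ≤ y' ∨ y' ≤ z) ∧ z ≤ a})
        (Finset.mem_filter.mpr ⟨Finset.mem_univ _, hyinc⟩)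
    omega

private lemma key_lemma (X : Type) [PartialOrder X] [Fintype X] (a : X) (m : ℕ) (hm : 1 ≤ m)
    (hB : 0 < NE X a m) : NE X a (m + 1) ≤ tpar X a * NE X a m := by
  classical
  unfold NE at hB ⊢
  obtain ⟨⟨⟨L₀, h₀ext, h₀pos⟩⟩, -⟩ := Nat.card_pos_iff.mp hB
  have hstep := fun (LL : {L : X ≃ Fin (Fintype.card X) //
      (∀ p q : X, p < q → L p < L q) ∧ (L a : ℕ) + 1 = m + 1}) =>
    step a m hm L₀ h₀ext h₀pos LL.1 LL.2.1 LL.2.2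
  choose him hmn hext' hpos' hidx using hstep
  have hinj : Function.Injective (fun LL : {L : X ≃ Fin (Fintype.card X) //
      (∀ p q : X, p < q → L p < L q) ∧ (L a : ℕ) + 1 = m + 1} =>
      ((⟨slide LL.1 (idx a m LL.1) m (him LL) (hmn LL), hext' LL, hpos' LL⟩ :
        {L : X ≃ Fin (Fintype.card X) // (∀ p q : X, p < q → L p < L q) ∧ (L a : ℕ) + 1 = m}),
       (⟨m - idx a m LL.1 - 1, hidx LL⟩ : Fin (tpar X a)))) := by
    intro L1 L2 h
    rw [Prod.ext_iff] at h
    obtain ⟨h1, h2⟩ := h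
    have hival : m - idx a m L1.1 - 1 = m - idx a m L2.1 - 1 := congrArg Fin.val h2
    have hi : idx a m L1.1 = idx a m L2.1 := by
      have := him L1; have := him L2; omega
    have hLeq : ∀ z : X, gmap (idx a m L1.1) m ((L1.1 : X ≃ Fin (Fintype.card X)) z)
        = gmap (idx a m L2.1) m ((L2.1 : X ≃ Fin (Fintype.card X)) z) := by
      intro z
      have h3 := congrArg Subtype.val h1
      have h4 := DFunLike.congr_fun h3 z
      exact congrArg Fin.val h4
    have hv : ∀ z : X, ((L1.1 : X ≃ Fin (Fintype.card X)) z : ℕ)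
        = ((L2.1 : X ≃ Fin (Fintype.card X)) z : ℕ) := by
      intro z
      have := hLeq z
      rw [← hi] at this
      exact gmap_inj (him L1) this
    apply Subtype.ext
    apply Equiv.ext
    intro z
    exact Fin.val_injective (hv z)
  have hle := Nat.card_le_card_of_injective _ hinj
  rw [Nat.card_prod] at hle
  have hfin : Nat.card (Fin (tpar X a)) = tpar X a := by simp
  rw [hfin, mul_comm] at hle
  exact hle

private lemma NE_eq_zero_of_out (X : Type) [PartialOrder X] [Fintype X] (a : X) (j : ℕ)
    (hj : j = 0 ∨ Fintype.card X < j) : NE X a j = 0 := by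
  unfold NE
  rw [Nat.card_eq_zero]
  left
  constructor
  rintro ⟨L, -, h⟩
  have := (L a).isLt
  omega

private lemma NE_dual (X : Type) [PartialOrder X] [Fintype X] (a : X) (j : ℕ) :
    NE (Xᵒᵈ) (OrderDual.toDual a) j = NE X a (Fintype.card X + 1 - j) := by
  unfold NE
  refine Nat.card_congr (Equiv.subtypeEquiv
    (Equiv.equivCongr (OrderDual.ofDual : Xᵒᵈ ≃ X) (Fin.revPerm : Equiv.Perm (Fin (Fintype.card X)))) ?_)
  intro L
  have hval : ((L (OrderDual.toDual a)).rev : ℕ)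
      = Fintype.card X - ((L (OrderDual.toDual a) : ℕ) + 1) :=
    Fin.val_rev (L (OrderDual.toDual a))
  have hlt : (L (OrderDual.toDual a) : ℕ) < Fintype.card X := (L (OrderDual.toDual a)).isLt
  constructor
  · rintro ⟨hext, hpos⟩
    constructor
    · intro p q hpq
      exact Fin.rev_lt_rev.mpr (hext (OrderDual.toDual q) (OrderDual.toDual p) hpq)
    · show ((L (OrderDual.toDual a)).rev : ℕ) + 1 = Fintype.card X + 1 - j
      rw [hval]
      omega
  · rintro ⟨hext, hpos⟩
    constructor
    · intro p q hpq
      exact Fin.rev_lt_rev.mp (hext (OrderDual.ofDual q) (OrderDual.ofDual p) hpq)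
    · have hpos' : ((L (OrderDual.toDual a)).rev : ℕ) + 1 = Fintype.card X + 1 - j := hpos
      rw [hval] at hpos'
      omega

private lemma tstar_dual (X : Type) [PartialOrder X] [Fintype X] (a : X) :
    tstar X a = tpar (Xᵒᵈ) (OrderDual.toDual a) := by
  classical
  have hcardeq : ∀ y : X,
      Nat.card {z : Xᵒᵈ // ¬(z ≤ OrderDual.toDual y ∨ OrderDual.toDual y ≤ z) ∧
        z ≤ OrderDual.toDual a}
      = Nat.card {z : X // ¬(z ≤ y ∨ y ≤ z) ∧ a ≤ z} := by
    intro y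
    refine Nat.card_congr (Equiv.subtypeEquiv (OrderDual.ofDual : Xᵒᵈ ≃ X) ?_)
    intro z
    constructor
    · rintro ⟨h1, h2⟩
      exact ⟨fun hc => h1 (hc.elim Or.inr Or.inl), h2⟩
    · rintro ⟨h1, h2⟩
      exact ⟨fun hc => h1 (hc.elim Or.inr Or.inl), h2⟩
  unfold tstar tpar
  by_cases h : ∃ y : X, ¬(y ≤ a ∨ a ≤ y)
  · have h' : ∃ y : Xᵒᵈ, ¬(y ≤ OrderDual.toDual a ∨ OrderDual.toDual a ≤ y) := by
      obtain ⟨y, hy⟩ := h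
      exact ⟨OrderDual.toDual y, fun hc => hy (hc.elim Or.inr Or.inl)⟩
    rw [if_pos h, if_pos h']
    apply le_antisymm
    · apply Finset.sup_le
      intro y hy
      have hy' : ¬(y ≤ a ∨ a ≤ y) := (Finset.mem_filter.mp hy).2
      calc Nat.card {z : X // ¬(z ≤ y ∨ y ≤ z) ∧ a ≤ z}
          = Nat.card {z : Xᵒᵈ // ¬(z ≤ OrderDual.toDual y ∨ OrderDual.toDual y ≤ z) ∧
              z ≤ OrderDual.toDual a} := (hcardeq y).symm
        _ ≤ _ := Finset.le_sup
              (f := fun y' : Xᵒᵈ => Nat.card {z : Xᵒᵈ // ¬(z ≤ y' ∨ y' ≤ z) ∧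
                z ≤ OrderDual.toDual a})
              (Finset.mem_filter.mpr ⟨Finset.mem_univ (OrderDual.toDual y),
              fun hc => hy' (hc.elim Or.inr Or.inl)⟩)
    · apply Finset.sup_le
      intro yd hyd
      have hyd' : ¬(yd ≤ OrderDual.toDual a ∨ OrderDual.toDual a ≤ yd) :=
        (Finset.mem_filter.mp hyd).2
      calc Nat.card {z : Xᵒᵈ // ¬(z ≤ yd ∨ yd ≤ z) ∧ z ≤ OrderDual.toDual a}
          = Nat.card {z : X // ¬(z ≤ OrderDual.ofDual yd ∨ OrderDual.ofDual yd ≤ z) ∧ a ≤ z} :=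
            hcardeq (OrderDual.ofDual yd)
        _ ≤ _ := Finset.le_sup
              (f := fun y' : X => Nat.card {z : X // ¬(z ≤ y' ∨ y' ≤ z) ∧ a ≤ z})
              (Finset.mem_filter.mpr ⟨Finset.mem_univ (OrderDual.ofDual yd),
              fun hc => hyd' (hc.elim Or.inr Or.inl)⟩)
  · have h' : ¬ ∃ y : Xᵒᵈ, ¬(y ≤ OrderDual.toDual a ∨ OrderDual.toDual a ≤ y) := by
      intro hc
      obtain ⟨y, hy⟩ := hc
      exact h ⟨OrderDual.ofDual y, fun hc2 => hy (hc2.elim Or.inr Or.inl)⟩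
    rw [if_neg h, if_neg h']

theorem single_element_ratio_bounds_t (X : Type) [PartialOrder X] [Fintype X]
    (a : X) (k : ℕ) (hk : 1 ≤ k) :
    (0 < NE X a (k - 1) → NE X a k ≤ tpar X a * NE X a (k - 1)) ∧
    (0 < NE X a (k + 1) → NE X a k ≤ tstar X a * NE X a (k + 1)) := by
  classical
  constructor
  · intro h
    rcases Nat.lt_or_ge k 2 with hk2 | hk2
    · exfalso
      have hk1 : k - 1 = 0 := by omega
      rw [hk1, NE_eq_zero_of_out X a 0 (Or.inl rfl)] at h
      exact absurd h (lt_irrefl 0)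
    · have hkey := key_lemma X a (k - 1) (by omega) h
      have hk1 : k - 1 + 1 = k := by omega
      rwa [hk1] at hkey
  · intro h
    rcases Nat.lt_or_ge k (Fintype.card X) with hkn | hkn
    · have hpos : 0 < NE (Xᵒᵈ) (OrderDual.toDual a) (Fintype.card X - k) := by
        rw [NE_dual]
        have e1 : Fintype.card X + 1 - (Fintype.card X - k) = k + 1 := by omega
        rwa [e1]
      have hdual := key_lemma (Xᵒᵈ) (OrderDual.toDual a) (Fintype.card X - k) (by omega) hpos
      rw [NE_dual, NE_dual, ← tstar_dual] at hdual
      have e1 : Fintype.card X + 1 - (Fintype.card X - k) = k + 1 := by omega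
      have e2 : Fintype.card X + 1 - (Fintype.card X - k + 1) = k := by omega
      rwa [e1, e2] at hdual
    · exfalso
      rw [NE_eq_zero_of_out X a (k + 1) (Or.inr (by omega))] at h
      exact absurd h (lt_irrefl 0)
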